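/- For a vector space V of dimension m = 2m̄ or 2m̄+1, there exists an algebraic curvature tensor A on V (namely A = Σ_{i=1}^{m̄} A_{Ψᵢ} with the Ψᵢ as above) such that any representation A = Σ_{j=1}^{ν} λⱼ A_{Φⱼ} with symmetric bilinear forms Φⱼ requires ν ≥ m̄. In particular ν(m) ≥ m/2. -/
import Mathlib

open scoped BigOperators



open Module Submodule

/-- If dim V = m with m = 2mb or m = 2mb+1, there is an algebraic
curvature tensor A (a sum of mb tensors A_{Ψᵢ}) such that every representation
A = Σ_{j=1}^{ν} λⱼ A_{Φⱼ} with symmetric bilinear forms Φⱼ requires ν ≥ mb;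
hence ν(m) ≥ m/2. -/
theorem stmt12 (V : Type*) [NormedAddCommGroup V] [InnerProductSpace ℝ V]
    [FiniteDimensional ℝ V] (m mb : ℕ)
    (hdim : Module.finrank ℝ V = m) (hm : m = 2 * mb ∨ m = 2 * mb + 1) :
    ∃ A : V → V → V → V → ℝ,
      (∃ Ψ : Fin mb → V →ₗ[ℝ] V →ₗ[ℝ] ℝ,
        (∀ i x y, Ψ i x y = Ψ i y x) ∧
        ∀ x y z w, A x y z w =
          ∑ i, (Ψ i x w * Ψ i y z - Ψ i x z * Ψ i y w)) ∧
      ∀ (ν : ℕ) (lam : Fin ν → ℝ) (Φ : Fin ν → V →ₗ[ℝ] V →ₗ[ℝ] ℝ),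
        (∀ j x y, Φ j x y = Φ j y x) →
        (∀ x y z w, A x y z w =
          ∑ j, lam j * (Φ j x w * Φ j y z - Φ j x z * Φ j y w)) →
        mb ≤ ν := by
  classical
  have hmb : 2 * mb ≤ m := by rcases hm with h | h <;> omega
  set b : Basis (Fin m) ℝ V := (Module.finBasis ℝ V).reindex (finCongr hdim) with hb
  set f : Fin m → Module.Dual ℝ V := b.coord with hf
  have hfval : ∀ (k i : Fin m), f k (b i) = if i = k then 1 else 0 := by
    intro k i
    simp [hf, Basis.coord_apply, Basis.repr_self_apply, Finsupp.single_apply]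
  set E : Fin mb → Fin m := fun i => ⟨2 * i, by omega⟩ with hE
  set O : Fin mb → Fin m := fun i => ⟨2 * i + 1, by omega⟩ with hO
  have hEO : ∀ i i', E i ≠ O i' := by
    intro i i' h
    have := congrArg Fin.val h
    simp [hE, hO] at this
    omega
  have hEinj : ∀ i i' : Fin mb, E i = E i' → i = i' := by
    intro i i' h
    have := congrArg Fin.val h
    simp [hE] at this
    exact Fin.ext this
  have hOinj : ∀ i i' : Fin mb, O i = O i' → i = i' := by
    intro i i' h
    have := congrArg Fin.val h
    simp [hO] at this
    exact Fin.ext this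
  set Ψ : Fin mb → V →ₗ[ℝ] V →ₗ[ℝ] ℝ := fun i =>
    (f (E i)).smulRight (f (E i)) + (f (O i)).smulRight (f (O i)) with hΨ
  have hΨapp : ∀ i x y, Ψ i x y = f (E i) x * f (E i) y + f (O i) x * f (O i) y := by
    intro i x y; simp [hΨ, smul_eq_mul]
  refine ⟨fun x y z w => ∑ i, (Ψ i x w * Ψ i y z - Ψ i x z * Ψ i y w),
    ⟨Ψ, fun i x y => by rw [hΨapp, hΨapp]; ring, fun x y z w => rfl⟩, ?_⟩
  intro ν lam Φ hsym hrep
  set ξ1 : V := ∑ i, b (E i) with hξ1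
  set ξ2 : V := ∑ i, b (O i) with hξ2
  have hfE1 : ∀ i, f (E i) ξ1 = 1 := by
    intro i
    rw [hξ1, map_sum, Finset.sum_eq_single i]
    · simp [hfval]
    · intro j _ hj
      rw [hfval]
      simp only [ite_eq_right_iff]
      intro h; exact absurd (hEinj _ _ h) hj
    · simp
  have hfO2 : ∀ i, f (O i) ξ2 = 1 := by
    intro i
    rw [hξ2, map_sum, Finset.sum_eq_single i]
    · simp [hfval]
    · intro j _ hj
      rw [hfval]
      simp only [ite_eq_right_iff]
      intro h; exact absurd (hOinj _ _ h) hj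
    · simp
  have hfE2 : ∀ i, f (E i) ξ2 = 0 := by
    intro i
    rw [hξ2, map_sum]
    refine Finset.sum_eq_zero fun j _ => ?_
    rw [hfval]
    simp only [ite_eq_right_iff]
    intro h; exact absurd h.symm (hEO i j)
  have hfO1 : ∀ i, f (O i) ξ1 = 0 := by
    intro i
    rw [hξ1, map_sum]
    refine Finset.sum_eq_zero fun j _ => ?_
    rw [hfval]
    simp only [ite_eq_right_iff]
    intro h; exact absurd h (hEO j i)
  -- key identity: the (1,3)-curvature at (ξ1, ξ2)
  have key : ∀ z w : V,
      ∑ i, (f (E i) w * f (O i) z - f (E i) z * f (O i) w)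
        = ∑ j, lam j * (Φ j ξ1 w * Φ j ξ2 z - Φ j ξ1 z * Φ j ξ2 w) := by
    intro z w
    have h := hrep ξ1 ξ2 z w
    rw [← h]
    refine Finset.sum_congr rfl fun i _ => ?_
    rw [hΨapp, hΨapp, hΨapp, hΨapp, hfE1, hfO1, hfE2, hfO2]
    ring
  set S : Submodule ℝ (Module.Dual ℝ V) :=
    span ℝ (Set.range (Sum.elim (fun j : Fin ν => (Φ j) ξ1) (fun j : Fin ν => (Φ j) ξ2))) with hS
  have hΦ1mem : ∀ j, (Φ j) ξ1 ∈ S := fun j => subset_span ⟨Sum.inl j, rfl⟩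
  have hΦ2mem : ∀ j, (Φ j) ξ2 ∈ S := fun j => subset_span ⟨Sum.inr j, rfl⟩
  -- evaluations on basis vectors
  have hOO : ∀ i i' : Fin mb, f (O i') (b (O i)) = if i = i' then 1 else 0 := by
    intro i i'
    rw [hfval]
    by_cases h : i = i'
    · simp [h]
    · rw [if_neg (fun hh => h (hOinj _ _ hh)), if_neg h]
  have hEE : ∀ i i' : Fin mb, f (E i') (b (E i)) = if i = i' then 1 else 0 := by
    intro i i'
    rw [hfval]
    by_cases h : i = i'
    · simp [h]
    · rw [if_neg (fun hh => h (hEinj _ _ hh)), if_neg h]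
  have hEObasis : ∀ i i' : Fin mb, f (E i') (b (O i)) = 0 := by
    intro i i'
    rw [hfval]
    exact if_neg (fun h => hEO i' i h.symm)
  have hOEbasis : ∀ i i' : Fin mb, f (O i') (b (E i)) = 0 := by
    intro i i'
    rw [hfval]
    exact if_neg (fun h => hEO i i' h)
  have hmemE : ∀ i, f (E i) ∈ S := by
    intro i
    have heq : f (E i) = ∑ j, ((lam j * Φ j ξ2 (b (O i))) • (Φ j) ξ1
        - (lam j * Φ j ξ1 (b (O i))) • (Φ j) ξ2) := by
      ext w
      have hL : ∑ i', (f (E i') w * f (O i') (b (O i)) - f (E i') (b (O i)) * f (O i') w)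
          = f (E i) w := by
        rw [Finset.sum_eq_single i]
        · rw [hOO, hEObasis]; simp
        · intro j _ hj
          rw [hOO, hEObasis, if_neg (fun h => hj h.symm)]; ring
        · simp
      have h := key (b (O i)) w
      rw [hL] at h
      rw [h]
      simp only [LinearMap.coe_sum, Finset.sum_apply, LinearMap.sub_apply,
        LinearMap.smul_apply, smul_eq_mul]
      refine Finset.sum_congr rfl fun j _ => ?_
      ring
    rw [heq]
    exact Submodule.sum_mem _ fun j _ =>
      Submodule.sub_mem _ (Submodule.smul_mem _ _ (hΦ1mem j)) (Submodule.smul_mem _ _ (hΦ2mem j))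
  have hmemO : ∀ i, f (O i) ∈ S := by
    intro i
    have heq : f (O i) = ∑ j, ((lam j * Φ j ξ1 (b (E i))) • (Φ j) ξ2
        - (lam j * Φ j ξ2 (b (E i))) • (Φ j) ξ1) := by
      ext w
      have hL : ∑ i', (f (E i') w * f (O i') (b (E i)) - f (E i') (b (E i)) * f (O i') w)
          = -(f (O i) w) := by
        rw [Finset.sum_eq_single i]
        · rw [hEE, hOEbasis]; simp
        · intro j _ hj
          rw [hEE, hOEbasis, if_neg (fun h => hj h.symm)]; ring
        · simp
      have h := key (b (E i)) w
      rw [hL] at h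
      have h' : f (O i) w
          = -∑ j, lam j * (Φ j ξ1 w * Φ j ξ2 (b (E i)) - Φ j ξ1 (b (E i)) * Φ j ξ2 w) := by
        rw [← h]; ring
      rw [h']
      simp only [LinearMap.coe_sum, Finset.sum_apply, LinearMap.sub_apply,
        LinearMap.smul_apply, smul_eq_mul, ← Finset.sum_neg_distrib]
      refine Finset.sum_congr rfl fun j _ => ?_
      ring
    rw [heq]
    exact Submodule.sum_mem _ fun j _ =>
      Submodule.sub_mem _ (Submodule.smul_mem _ _ (hΦ2mem j)) (Submodule.smul_mem _ _ (hΦ1mem j))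
  -- linear independence of the 2*mb coordinate functionals
  set G : Fin mb ⊕ Fin mb → Module.Dual ℝ V := Sum.elim (fun i => f (E i)) (fun i => f (O i))
    with hG
  have hGli : LinearIndependent ℝ G := by
    have hJ : Function.Injective (Sum.elim E O) := by
      rintro (i | i) (i' | i') h
      · exact congrArg Sum.inl (hEinj _ _ h)
      · exact absurd h (hEO i i')
      · exact absurd h.symm (hEO i' i)
      · exact congrArg Sum.inr (hOinj _ _ h)
    have : G = b.dualBasis ∘ Sum.elim E O := by
      ext (i | i) <;> simp [hG, hf, Basis.coe_dualBasis]
    rw [this]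
    exact b.dualBasis.linearIndependent.comp _ hJ
  have hle : span ℝ (Set.range G) ≤ S := by
    rw [span_le]
    rintro _ ⟨(i | i), rfl⟩
    · exact hmemE i
    · exact hmemO i
  have h1 : finrank ℝ (span ℝ (Set.range G)) = mb + mb := by
    rw [finrank_span_eq_card hGli]
    simp
  have h2 : finrank ℝ S ≤ ν + ν := by
    have := finrank_range_le_card (R := ℝ)
      (Sum.elim (fun j : Fin ν => (Φ j) ξ1) (fun j : Fin ν => (Φ j) ξ2))
    simpa [hS, Set.finrank] using this
  have h3 : finrank ℝ (span ℝ (Set.range G)) ≤ finrank ℝ S := Submodule.finrank_mono hle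
  omega
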